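/- Let J = [-1, 1] and let f : J² → J² be a normally rising homeomorphism. Then for every (r, s) ∈ (-1, 1)², the ω-limit set ω((r, s), f) is a nonempty connected closed subset of J × {1}, and the α-limit set α((r, s), f) is a nonempty connected closed subset of J × {-1}. -/

import Mathlib

open Filter Topology

/-- The ω-limit set of `x` under `f`. -/
def omegaSet {X : Type*} [TopologicalSpace X] (f : X → X) (x : X) : Set X :=
  {y | ∃ φ : ℕ → ℕ, StrictMono φ ∧ (∀ i, 0 < φ i) ∧
    Tendsto (fun i => f^[φ i] x) atTop (𝓝 y)}

/-- The piecewise homeomorphism `f₀₁` of `[-1,1]`. -/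
noncomputable def f01 (s : ℝ) : ℝ :=
  if 0 ≤ s then (s + 1) / 2 else if -1/2 ≤ s then s + 1/2 else 2 * s + 1

/-- The interval `J = [-1,1]` as a subtype. -/
abbrev Jt : Type := ↥(Set.Icc (-1 : ℝ) 1)

/-- The square `J²`. -/
abbrev Sq : Type := Jt × Jt

/-- A homeomorphism of the square `J²` is normally rising if it agrees with
`f₀₂ : (r,s) ↦ (r, f₀₁ s)` on the boundary `∂J²`, and maps each horizontal
segment `J_s = J × {s}` onto `f₀₂(J_s) = J × {f₀₁ s}`. -/
def NormallyRising (f : Sq ≃ₜ Sq) : Prop :=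
  (∀ x : Sq, ((x.1 : ℝ) = -1 ∨ (x.1 : ℝ) = 1 ∨ (x.2 : ℝ) = -1 ∨ (x.2 : ℝ) = 1) →
    ((f x).1 : ℝ) = (x.1 : ℝ) ∧ ((f x).2 : ℝ) = f01 (x.2 : ℝ)) ∧
  (∀ s : Jt, (fun x : Sq => f x) '' {x : Sq | x.2 = s} =
    {x : Sq | (x.2 : ℝ) = f01 (s : ℝ)})

section Auxiliary

open Metric Set

/-- Frequently entering a closed set gives a cluster point in that set (compact space). -/
lemma clusterPt_of_frequently {X : Type*} [TopologicalSpace X] [CompactSpace X] {u : ℕ → X}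
    {C : Set X} (hC : IsClosed C) (h : ∃ᶠ n in atTop, u n ∈ C) :
    ∃ y ∈ C, MapClusterPt y atTop u := by
  have hne : NeBot (map u atTop ⊓ 𝓟 C) := by
    rw [← frequently_mem_iff_neBot]
    exact (frequently_map (P := fun y => y ∈ C)).mpr h
  obtain ⟨y, hy⟩ := exists_clusterPt_of_compactSpace (map u atTop ⊓ 𝓟 C)
  refine ⟨y, ?_, hy.mono inf_le_left⟩
  have : ClusterPt y (𝓟 C) := hy.mono inf_le_right
  rwa [← mem_closure_iff_clusterPt, hC.closure_eq] at this

/-- If a continuous real function vanishes on all cluster points of a sequence in a compact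
space, it tends to zero along the sequence. -/
lemma tendsto_zero_of_clusterPts {X : Type*} [MetricSpace X] [CompactSpace X] {u : ℕ → X}
    {F : X → ℝ} (hF : Continuous F) (h : ∀ y, MapClusterPt y atTop u → F y = 0) :
    Tendsto (fun n => F (u n)) atTop (𝓝 0) := by
  by_contra hc
  rw [Metric.tendsto_atTop] at hc
  push_neg at hc
  obtain ⟨ε, hε, hfr⟩ := hc
  have hfreq : ∃ᶠ n in atTop, u n ∈ {x | ε ≤ dist (F x) 0} := by
    rw [frequently_atTop]
    intro N; obtain ⟨n, hn, hn'⟩ := hfr N; exact ⟨n, hn, hn'⟩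
  obtain ⟨y, hyC, hy⟩ := clusterPt_of_frequently
    (isClosed_le continuous_const ((hF.dist continuous_const))) hfreq
  have := h y hy
  simp only [Set.mem_setOf_eq, this, dist_zero_left, norm_zero] at hyC
  linarith

/-- The cluster set of a sequence with vanishing step sizes in a compact metric space
is preconnected. -/
lemma isPreconnected_clusterSet {X : Type*} [MetricSpace X] [CompactSpace X] {u : ℕ → X}
    (hstep : Tendsto (fun n => dist (u (n + 1)) (u n)) atTop (𝓝 0)) :
    IsPreconnected {y | MapClusterPt y atTop u} := by
  set K := {y | MapClusterPt y atTop u} with hK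
  have hKclosed : IsClosed K := isClosed_setOf_clusterPt
  intro U V hU hV hKUV ⟨p, hpK, hpU⟩ ⟨q, hqK, hqV⟩
  by_contra hcon
  have hempty : K ∩ (U ∩ V) = ∅ := Set.not_nonempty_iff_eq_empty.mp hcon
  set A := K \ V with hA
  set B := K \ U with hB
  have hAclosed : IsClosed A := hKclosed.sdiff hV
  have hBclosed : IsClosed B := hKclosed.sdiff hU
  have hpA : p ∈ A := ⟨hpK, fun hpV => (Set.eq_empty_iff_forall_notMem.mp hempty p) ⟨hpK, hpU, hpV⟩⟩
  have hqB : q ∈ B := ⟨hqK, fun hqU => (Set.eq_empty_iff_forall_notMem.mp hempty q) ⟨hqK, hqU, hqV⟩⟩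
  have hBne : B.Nonempty := ⟨q, hqB⟩
  -- every point of K is in A or B
  have hKAB : ∀ y ∈ K, y ∈ A ∨ y ∈ B := by
    intro y hy
    rcases hKUV hy with h | h
    · exact Or.inl ⟨hy, fun hv => (Set.eq_empty_iff_forall_notMem.mp hempty y) ⟨hy, h, hv⟩⟩
    · exact Or.inr ⟨hy, fun hu => (Set.eq_empty_iff_forall_notMem.mp hempty y) ⟨hy, hu, h⟩⟩
  -- positive distance between A and B
  obtain ⟨a₀, ha₀A, ha₀min⟩ := (hAclosed.isCompact).exists_isMinOn ⟨p, hpA⟩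
    ((continuous_infDist_pt B).continuousOn)
  set δ := infDist a₀ B with hδdef
  have hδpos : 0 < δ := by
    rw [hδdef, ← hBclosed.notMem_iff_infDist_pos hBne]
    intro hmem
    exact hmem.2 (by rcases hKUV ha₀A.1 with h | h; exact h; exact absurd h ha₀A.2)
  have hδA : ∀ a ∈ A, δ ≤ infDist a B := fun a ha => ha₀min ha
  set g := fun n => infDist (u n) B with hg
  have hglip : ∀ n, |g (n + 1) - g n| ≤ dist (u (n + 1)) (u n) := by
    intro n
    rw [abs_sub_le_iff]
    constructor
    · have := infDist_le_infDist_add_dist (x := u (n+1)) (y := u n) (s := B); linarith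
    · have := infDist_le_infDist_add_dist (x := u n) (y := u (n+1)) (s := B)
      rw [dist_comm] at this; linarith
  -- frequently near B
  have hfreqB : ∃ᶠ n in atTop, g n < δ / 3 := by
    have hq' : MapClusterPt q atTop u := hqK
    have : ∀ s ∈ 𝓝 q, ∃ᶠ n in atTop, u n ∈ s := mapClusterPt_iff_frequently.mp hq'
    refine (this (ball q (δ / 3)) (ball_mem_nhds q (by linarith))).mono ?_
    intro n hn
    calc g n ≤ dist (u n) q := infDist_le_dist_of_mem hqB
    _ < δ / 3 := hn
  -- frequently far from B
  have hfreqA : ∃ᶠ n in atTop, 2 * δ / 3 < g n := by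
    have hp' : MapClusterPt p atTop u := hpK
    have : ∀ s ∈ 𝓝 p, ∃ᶠ n in atTop, u n ∈ s := mapClusterPt_iff_frequently.mp hp'
    refine (this (ball p (δ / 3)) (ball_mem_nhds p (by linarith))).mono ?_
    intro n hn
    have h1 : δ ≤ infDist p B := hδA p hpA
    have h2 : infDist p B ≤ infDist (u n) B + dist p (u n) :=
      infDist_le_infDist_add_dist
    have hd : dist p (u n) < δ / 3 := by rw [dist_comm]; exact mem_ball.mp hn
    simp only [hg]; linarith
  -- eventually small steps
  obtain ⟨N₀, hN₀⟩ := (Metric.tendsto_atTop.mp hstep (δ / 3) (by linarith))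
  have hstep' : ∀ n ≥ N₀, dist (u (n + 1)) (u n) < δ / 3 := by
    intro n hn
    have := hN₀ n hn
    rwa [Real.dist_eq, sub_zero, abs_of_nonneg dist_nonneg] at this
  -- frequently in the middle band
  have hmid : ∃ᶠ n in atTop, g n ∈ Set.Icc (δ / 3) (2 * δ / 3) := by
    rw [frequently_atTop]
    intro N
    obtain ⟨n₁, hn₁ge, hn₁⟩ := frequently_atTop.mp hfreqA (max N N₀)
    obtain ⟨n₂, hn₂ge, hn₂⟩ := frequently_atTop.mp hfreqB (n₁ + 1)
    have hex : ∃ k, g k < δ / 3 ∧ n₁ < k := ⟨n₂, hn₂, by omega⟩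
    set m := Nat.find hex with hm
    obtain ⟨hmlt, hmgt⟩ := Nat.find_spec hex
    have hm1 : m - 1 ≥ n₁ := by omega
    have hmpos : 1 ≤ m := by omega
    refine ⟨m - 1, by omega, ?_, ?_⟩
    · -- g (m-1) ≥ δ/3
      rcases eq_or_lt_of_le hm1 with h | h
      · rw [h] at hn₁; linarith
      · have : ¬(g (m - 1) < δ / 3 ∧ n₁ < m - 1) := Nat.find_min hex (by omega)
        push_neg at this
        exact le_of_not_gt (fun hc => absurd (this hc) (by omega))
    · -- g (m-1) ≤ 2δ/3
      have hs : dist (u (m - 1 + 1)) (u (m - 1)) < δ / 3 := hstep' (m - 1) (by omega)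
      have hl := hglip (m - 1)
      have hmm : m - 1 + 1 = m := by omega
      rw [hmm] at hs hl
      have : |g m - g (m - 1)| < δ / 3 := lt_of_le_of_lt hl hs
      rw [abs_sub_lt_iff] at this
      linarith
  -- cluster point in the band
  have hCclosed : IsClosed {x : X | infDist x B ∈ Set.Icc (δ / 3) (2 * δ / 3)} :=
    (isClosed_Icc).preimage (continuous_infDist_pt B)
  obtain ⟨y, hyC, hy⟩ := clusterPt_of_frequently hCclosed hmid
  rcases hKAB y hy with h | h
  · have := hδA y h
    have hyC2 := hyC.2
    linarith
  · have h0 : infDist y B = 0 := infDist_zero_of_mem h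
    have hyC1 := hyC.1
    simp only [Set.mem_setOf_eq, h0] at hyC1
    linarith

/-- The ω set defined via subsequences coincides with the set of cluster points. -/
lemma omegaSet_eq_clusterSet {X : Type*} [TopologicalSpace X]
    [FirstCountableTopology X] (f : X → X) (x : X) :
    omegaSet f x = {y | MapClusterPt y atTop (fun n => f^[n] x)} := by
  ext y
  constructor
  · rintro ⟨φ, hφ, -, hlim⟩
    simp only [Set.mem_setOf_eq, mapClusterPt_iff_frequently]
    intro s hs
    rw [frequently_atTop]
    intro N
    obtain ⟨i, hiN, his⟩ := ((eventually_ge_atTop N).and (hlim.eventually_mem hs)).exists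
    exact ⟨φ i, le_trans hiN (hφ.le_apply), his⟩
  · intro hy
    obtain ⟨ψ, hψ, hlim⟩ := TopologicalSpace.FirstCountableTopology.tendsto_subseq hy
    refine ⟨fun i => ψ (i + 1), fun a b hab => hψ (by omega), fun i => ?_, ?_⟩
    · show 0 < ψ (i + 1)
      have : i + 1 ≤ ψ (i + 1) := hψ.le_apply; omega
    · exact hlim.comp (tendsto_add_atTop_nat 1)

lemma f01_continuous : Continuous f01 := by
  unfold f01
  apply Continuous.if_le
  · continuity
  · apply Continuous.if_le
    · continuity
    · continuity
    · exact continuous_const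
    · exact continuous_id
    · intro x hx; norm_num [← hx]
  · exact continuous_const
  · exact continuous_id
  · intro x hx; norm_num [← hx]

lemma f01_ge {t : ℝ} (h1 : -1 ≤ t) (h2 : t ≤ 1) : t ≤ f01 t := by
  unfold f01; split_ifs <;> linarith

lemma f01_fixed {t : ℝ} (h1 : -1 ≤ t) (h2 : t ≤ 1) (h : f01 t = t) : t = -1 ∨ t = 1 := by
  unfold f01 at h; split_ifs at h <;> [right; left; left] <;> linarith

lemma f01_one : f01 1 = 1 := by norm_num [f01]

lemma f01_neg_one : f01 (-1) = -1 := by norm_num [f01]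

/-- Main glue lemma: combined properties of the ω-limit set of an orbit whose
`π`-coordinate converges to a value where the map is the identity. -/
lemma main_lemma {X : Type*} [MetricSpace X] [CompactSpace X]
    {T : X → X} (hT : Continuous T) (x : X) {π : X → ℝ} (hπ : Continuous π) {c : ℝ}
    (hc : Tendsto (fun n => π (T^[n] x)) atTop (𝓝 c))
    (hfix : ∀ y : X, π y = c → T y = y) :
    (omegaSet T x).Nonempty ∧ IsConnected (omegaSet T x) ∧ IsClosed (omegaSet T x) ∧
      omegaSet T x ⊆ {y : X | π y = c} := by
  rw [omegaSet_eq_clusterSet T x]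
  set u : ℕ → X := fun n => T^[n] x with hu
  set K := {y | MapClusterPt y atTop u} with hK
  have hsub : K ⊆ {y : X | π y = c} := by
    intro y hy
    have h1 : MapClusterPt (π y) atTop (π ∘ u) := hy.tendsto_comp (hπ.tendsto y)
    have h2 : map (π ∘ u) atTop ≤ 𝓝 c := hc
    exact eq_of_nhds_neBot (h1.clusterPt.neBot.mono (inf_le_inf_left _ h2))
  have hne : K.Nonempty := by
    obtain ⟨y, -, hy⟩ := clusterPt_of_frequently (u := u) isClosed_univ
      (Frequently.of_forall fun n => Set.mem_univ _)
    exact ⟨y, hy⟩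
  have hsteps : Tendsto (fun n => dist (u (n + 1)) (u n)) atTop (𝓝 0) := by
    have h0 : ∀ y, MapClusterPt y atTop u → dist (T y) y = 0 := by
      intro y hy
      rw [dist_eq_zero]
      exact hfix y (hsub hy)
    have := tendsto_zero_of_clusterPts (u := u) (hT.dist continuous_id) h0
    refine this.congr fun n => ?_
    simp only [hu, Function.iterate_succ_apply', id_eq]
  refine ⟨hne, ⟨hne, isPreconnected_clusterSet hsteps⟩, isClosed_setOf_clusterPt, hsub⟩

/-- The second coordinate of `f x` is `f01` of the second coordinate of `x`. -/
lemma snd_apply {f : Sq ≃ₜ Sq} (hf : NormallyRising f) (x : Sq) :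
    ((f x).2 : ℝ) = f01 (x.2 : ℝ) := by
  have h := hf.2 x.2
  have hx : f x ∈ (fun z : Sq => f z) '' {z : Sq | z.2 = x.2} := ⟨x, rfl, rfl⟩
  rw [h] at hx
  exact hx

/-- Second coordinates of the forward orbit converge to `1`. -/
lemma tendsto_snd_forward {f : Sq ≃ₜ Sq} (hf : NormallyRising f) (x : Sq)
    (hx : -1 < (x.2 : ℝ)) :
    Tendsto (fun n => (((⇑f)^[n] x).2 : ℝ)) atTop (𝓝 1) := by
  set a : ℕ → ℝ := fun n => (((⇑f)^[n] x).2 : ℝ) with ha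
  have hb : ∀ n, a n ∈ Set.Icc (-1 : ℝ) 1 := fun n => (((⇑f)^[n] x).2).2
  have hrec : ∀ n, a (n + 1) = f01 (a n) := by
    intro n
    simp only [ha, Function.iterate_succ_apply']
    exact snd_apply hf _
  have hmono : Monotone a :=
    monotone_nat_of_le_succ fun n => (hrec n) ▸ f01_ge (hb n).1 (hb n).2
  have hbdd : BddAbove (Set.range a) := ⟨1, by rintro _ ⟨n, rfl⟩; exact (hb n).2⟩
  have hlim : Tendsto a atTop (𝓝 (⨆ n, a n)) := tendsto_atTop_ciSup hmono hbdd
  set L := ⨆ n, a n with hL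
  have hL1 : L ≤ 1 := ciSup_le fun n => (hb n).2
  have hL2 : a 0 ≤ L := le_ciSup hbdd 0
  have hLm1 : -1 ≤ L := le_trans (hb 0).1 hL2
  have hfixL : f01 L = L := by
    have h1 : Tendsto (fun n => a (n + 1)) atTop (𝓝 L) := hlim.comp (tendsto_add_atTop_nat 1)
    have h2 : Tendsto (fun n => f01 (a n)) atTop (𝓝 (f01 L)) :=
      (f01_continuous.tendsto L).comp hlim
    exact tendsto_nhds_unique (h2.congr fun n => (hrec n).symm) h1
  rcases f01_fixed hLm1 hL1 hfixL with h | h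
  · exfalso
    have : a 0 = (x.2 : ℝ) := by simp [ha]
    rw [this] at hL2
    linarith
  · rwa [h] at hlim

/-- Second coordinates of the backward orbit converge to `-1`. -/
lemma tendsto_snd_backward {f : Sq ≃ₜ Sq} (hf : NormallyRising f) (x : Sq)
    (hx : (x.2 : ℝ) < 1) :
    Tendsto (fun n => (((⇑f.symm)^[n] x).2 : ℝ)) atTop (𝓝 (-1)) := by
  set b : ℕ → ℝ := fun n => (((⇑f.symm)^[n] x).2 : ℝ) with hb'
  have hb : ∀ n, b n ∈ Set.Icc (-1 : ℝ) 1 := fun n => (((⇑f.symm)^[n] x).2).2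
  have hrec : ∀ n, b n = f01 (b (n + 1)) := by
    intro n
    have h1 : (⇑f.symm)^[n + 1] x = f.symm ((⇑f.symm)^[n] x) :=
      Function.iterate_succ_apply' _ _ _
    have h2 := snd_apply hf ((⇑f.symm)^[n + 1] x)
    rw [h1, f.apply_symm_apply] at h2
    rw [← h1] at h2
    exact h2
  have hanti : Antitone b := antitone_nat_of_succ_le fun n =>
    (hrec n) ▸ f01_ge (hb (n + 1)).1 (hb (n + 1)).2
  have hbdd : BddBelow (Set.range b) := ⟨-1, by rintro _ ⟨n, rfl⟩; exact (hb n).1⟩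
  have hlim : Tendsto b atTop (𝓝 (⨅ n, b n)) := tendsto_atTop_ciInf hanti hbdd
  set L := ⨅ n, b n with hL
  have hLm1 : -1 ≤ L := le_ciInf fun n => (hb n).1
  have hL2 : L ≤ b 0 := ciInf_le hbdd 0
  have hL1 : L ≤ 1 := le_trans hL2 (hb 0).2
  have hfixL : f01 L = L := by
    have h1 : Tendsto (fun n => b (n + 1)) atTop (𝓝 L) := hlim.comp (tendsto_add_atTop_nat 1)
    have h2 : Tendsto (fun n => f01 (b (n + 1))) atTop (𝓝 (f01 L)) :=
      (f01_continuous.tendsto L).comp h1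
    exact tendsto_nhds_unique (hlim.congr fun n => hrec n) h2 ▸ rfl
  rcases f01_fixed hLm1 hL1 hfixL with h | h
  · rwa [h] at hlim
  · exfalso
    have : b 0 = (x.2 : ℝ) := by simp [hb']
    rw [this] at hL2
    linarith

lemma fix_top {f : Sq ≃ₜ Sq} (hf : NormallyRising f) (y : Sq) (hy : (y.2 : ℝ) = 1) :
    f y = y := by
  obtain ⟨h1, h2⟩ := hf.1 y (Or.inr (Or.inr (Or.inr hy)))
  rw [hy, f01_one] at h2
  exact Prod.ext (Subtype.ext h1) (Subtype.ext (h2.trans hy.symm))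

lemma fix_bot {f : Sq ≃ₜ Sq} (hf : NormallyRising f) (y : Sq) (hy : (y.2 : ℝ) = -1) :
    f.symm y = y := by
  have hfy : f y = y := by
    obtain ⟨h1, h2⟩ := hf.1 y (Or.inr (Or.inr (Or.inl hy)))
    rw [hy, f01_neg_one] at h2
    exact Prod.ext (Subtype.ext h1) (Subtype.ext (h2.trans hy.symm))
  conv_lhs => rw [← hfy]
  exact f.symm_apply_apply y

end Auxiliary

theorem stmt_11 (f : Sq ≃ₜ Sq) (hf : NormallyRising f)
    (r s : Jt) (hr : (r : ℝ) ∈ Set.Ioo (-1 : ℝ) 1) (hs : (s : ℝ) ∈ Set.Ioo (-1 : ℝ) 1) :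
    ((omegaSet (⇑f) (r, s)).Nonempty ∧ IsConnected (omegaSet (⇑f) (r, s)) ∧
      IsClosed (omegaSet (⇑f) (r, s)) ∧
      omegaSet (⇑f) (r, s) ⊆ {x : Sq | (x.2 : ℝ) = 1}) ∧
    ((omegaSet (⇑f.symm) (r, s)).Nonempty ∧ IsConnected (omegaSet (⇑f.symm) (r, s)) ∧
      IsClosed (omegaSet (⇑f.symm) (r, s)) ∧
      omegaSet (⇑f.symm) (r, s) ⊆ {x : Sq | (x.2 : ℝ) = -1}) := by
  have hπ : Continuous (fun y : Sq => (y.2 : ℝ)) := continuous_subtype_val.comp continuous_snd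
  constructor
  · exact main_lemma f.continuous (r, s) hπ (tendsto_snd_forward hf (r, s) hs.1)
      (fun y hy => fix_top hf y hy)
  · exact main_lemma f.symm.continuous (r, s) hπ (tendsto_snd_backward hf (r, s) hs.2)
      (fun y hy => fix_bot hf y hy)
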